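/- Let G be a finite group satisfying property Pₙ (for every prime p, at most n−1 non-central conjugacy classes have representative order divisible by p), and let N be a normal subgroup of G. Then the quotient group G/N also satisfies property Pₙ. -/
import Mathlib

/-- Property `Pₙ`: for every prime `p`, at most `n - 1` non-central conjugacy
classes have representative order divisible by `p`. -/
def propertyP (G : Type*) [Group G] (n : ℕ) : Prop :=
  ∀ p : ℕ, p.Prime →
    {c : ConjClasses G | ∃ x : G, c = ConjClasses.mk x ∧ x ∉ Subgroup.center G ∧ p ∣ orderOf x}.ncard ≤ n - 1

theorem stmt2 (G : Type*) [Group G] [Finite G] (n : ℕ)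
    (N : Subgroup G) [N.Normal] (hP : propertyP G n) :
    propertyP (G ⧸ N) n := by
  intro p hp
  refine le_trans ?_ (hP p hp)
  have hmkout : ∀ c : ConjClasses (G ⧸ N), ConjClasses.mk (Quotient.out c) = c :=
    fun c => Quotient.out_eq c
  have hqout : ∀ x : G ⧸ N, (QuotientGroup.mk (Quotient.out x) : G ⧸ N) = x :=
    fun x => Quotient.out_eq x
  have hcent : ∀ y : G, y ∈ Subgroup.center G →
      (QuotientGroup.mk y : G ⧸ N) ∈ Subgroup.center (G ⧸ N) := by
    intro y hy
    rw [Subgroup.mem_center_iff]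
    intro z
    induction z using QuotientGroup.induction_on with
    | H g =>
      have := (Subgroup.mem_center_iff.mp hy) g
      rw [← QuotientGroup.mk_mul, ← QuotientGroup.mk_mul, this]
  classical
  apply Set.ncard_le_ncard_of_injOn
    (fun c : ConjClasses (G ⧸ N) => ConjClasses.mk (Quotient.out (Quotient.out c)))
  · -- maps into the target set
    rintro c ⟨x, hcx, hx, hdvd⟩
    refine ⟨Quotient.out (Quotient.out c), rfl, ?_, ?_⟩
    · -- noncentrality
      intro hz
      have hyc : (QuotientGroup.mk (Quotient.out (Quotient.out c)) : G ⧸ N)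
          ∈ Subgroup.center (G ⧸ N) := hcent _ hz
      rw [hqout] at hyc
      -- x is conjugate to `Quotient.out c`
      have hconj : IsConj x (Quotient.out c) :=
        ConjClasses.mk_eq_mk_iff_isConj.mp (hcx ▸ (hmkout c).symm)
      obtain ⟨u, hu⟩ := hconj
      have hxy : x = Quotient.out c := by
        have h1 : (u : G ⧸ N) * x = Quotient.out c * u := hu
        have h2 : Quotient.out c * (u : G ⧸ N) = u * Quotient.out c :=
          ((Subgroup.mem_center_iff.mp hyc) u).symm
        exact mul_left_cancel (h1.trans h2)
      exact hx (hxy ▸ hyc)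
    · -- order divisibility
      have hconj : IsConj x (Quotient.out c) :=
        ConjClasses.mk_eq_mk_iff_isConj.mp (hcx ▸ (hmkout c).symm)
      obtain ⟨u, hu⟩ := hconj
      have h1 : orderOf x = orderOf (Quotient.out c) := hu.orderOf_eq
      have h2 : orderOf (Quotient.out c) ∣ orderOf (Quotient.out (Quotient.out c)) := by
        have h3 := orderOf_map_dvd (QuotientGroup.mk' N) (Quotient.out (Quotient.out c))
        rwa [QuotientGroup.mk'_apply, hqout] at h3
      exact hdvd.trans (h1 ▸ h2)
  · -- injectivity on the set
    intro c _ c' _ hfc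
    have h : IsConj (Quotient.out (Quotient.out c)) (Quotient.out (Quotient.out c')) :=
      ConjClasses.mk_eq_mk_iff_isConj.mp hfc
    have h2 : IsConj ((QuotientGroup.mk' N) (Quotient.out (Quotient.out c)))
        ((QuotientGroup.mk' N) (Quotient.out (Quotient.out c'))) :=
      (QuotientGroup.mk' N).map_isConj h
    rw [QuotientGroup.mk'_apply, QuotientGroup.mk'_apply, hqout, hqout] at h2
    rw [← hmkout c, ← hmkout c']
    exact ConjClasses.mk_eq_mk_iff_isConj.mpr h2
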